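/- For the (-1,1)-continued fraction algorithm applied to an irrational number x, the nonzero partial quotients alternate in sign: for all j ≥ 1, a_j and a_{j+1} have opposite signs. -/

import Mathlib

/-- The generalized integer part `[x]_{a,b}`. -/
noncomputable def gip (a b x : ℝ) : ℤ :=
  if x < a then ⌊x - a⌋ else if x < b then 0 else ⌊x - b⌋ + 1

/-- The orbit `x_0 = x`, `x_j = -1/(x_{j-1} - [x_{j-1}]_{a,b})` of the
`(a,b)`-continued fraction algorithm. -/
noncomputable def cfOrbit (a b x : ℝ) : ℕ → ℝ
  | 0 => x
  | j + 1 => -1 / (cfOrbit a b x j - (gip a b (cfOrbit a b x j) : ℝ))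

lemma gip_pos_of (y : ℝ) (h : 1 < y) : 1 ≤ gip (-1) 1 y := by
  unfold gip
  rw [if_neg (by linarith), if_neg (by linarith)]
  have : (0:ℤ) ≤ ⌊y - 1⌋ := Int.floor_nonneg.2 (by linarith)
  omega

lemma gip_neg_of (y : ℝ) (h : y < -1) : gip (-1) 1 y ≤ -1 := by
  unfold gip
  rw [if_pos h]
  have : ⌊y - (-1)⌋ < 0 := by
    rw [Int.floor_lt]
    push_cast; linarith
  omega

lemma frac_mem (y : ℝ) (hy : Irrational y) :
    -1 < y - (gip (-1) 1 y : ℝ) ∧ y - (gip (-1) 1 y : ℝ) < 1 ∧ y - (gip (-1) 1 y : ℝ) ≠ 0 := by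
  have hne : ∀ m : ℤ, y ≠ m := fun m => hy.ne_int m
  unfold gip
  rcases lt_trichotomy y (-1) with h | h | h
  · rw [if_pos h]
    have h1 : (⌊y - (-1)⌋ : ℝ) ≤ y - (-1) := Int.floor_le _
    have h2 : y - (-1) < ⌊y - (-1)⌋ + 1 := Int.lt_floor_add_one _
    have hne0 : y - (⌊y - (-1)⌋ : ℝ) ≠ 0 := fun h0 => hne ⌊y - (-1)⌋ (by linarith)
    have hne1 : y - (⌊y - (-1)⌋ : ℝ) ≠ -1 := fun h0 => hne (⌊y - (-1)⌋ - 1) (by push_cast; linarith)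
    exact ⟨lt_of_le_of_ne (by linarith) (Ne.symm hne1), by linarith, hne0⟩
  · exact absurd h (by have := hne (-1); push_cast at this; exact this)
  · rcases lt_trichotomy y 1 with h1 | h1 | h1
    · rw [if_neg (by linarith), if_pos h1]
      push_cast
      refine ⟨by linarith, by linarith, ?_⟩
      intro h0
      exact hne 0 (by push_cast; linarith)
    · exact absurd h1 (by have := hne 1; push_cast at this; exact this)
    · rw [if_neg (by linarith), if_neg (by linarith)]
      have ha : (⌊y - 1⌋ : ℝ) ≤ y - 1 := Int.floor_le _
      have hb : y - 1 < ⌊y - 1⌋ + 1 := Int.lt_floor_add_one _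
      push_cast
      refine ⟨by linarith, by linarith, ?_⟩
      intro h0
      exact hne (⌊y - 1⌋ + 1) (by push_cast; linarith)

lemma step_pos (y : ℝ) (hy : Irrational y) (h : 1 < y) :
    -1 / (y - (gip (-1) 1 y : ℝ)) < -1 := by
  obtain ⟨h1, h2, h3⟩ := frac_mem y hy
  have hg : 1 ≤ gip (-1) 1 y := gip_pos_of y h
  have hg' : (1:ℝ) ≤ (gip (-1) 1 y : ℝ) := by exact_mod_cast hg
  have ht : 0 < y - (gip (-1) 1 y : ℝ) := by
    -- y > 1 and gip = ⌊y-1⌋+1, so y - gip = fract(y-1) ≥ 0, ≠ 0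
    have : (gip (-1) 1 y : ℝ) ≤ y := by
      unfold gip
      rw [if_neg (by linarith), if_neg (by linarith)]
      have := Int.floor_le (y - 1)
      push_cast; linarith
    rcases lt_or_eq_of_le this with h' | h'
    · linarith
    · exact absurd h'.symm (fun e => h3 (by linarith))
  rw [div_lt_iff₀ ht]
  linarith

lemma step_neg (y : ℝ) (hy : Irrational y) (h : y < -1) :
    1 < -1 / (y - (gip (-1) 1 y : ℝ)) := by
  obtain ⟨h1, h2, h3⟩ := frac_mem y hy
  have ht : y - (gip (-1) 1 y : ℝ) < 0 := by
    have : y ≤ (gip (-1) 1 y : ℝ) := by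
      unfold gip
      rw [if_pos h]
      have := Int.lt_floor_add_one (y - (-1))
      push_cast at this ⊢
      linarith
    rcases lt_or_eq_of_le this with h' | h'
    · linarith
    · exact absurd h' (fun e => h3 (by linarith))
  rw [lt_div_iff_of_neg ht]
  linarith

lemma irr_orbit (x : ℝ) (hx : Irrational x) : ∀ j, Irrational (cfOrbit (-1) 1 x j) := by
  intro j
  induction j with
  | zero => exact hx
  | succ j ih =>
    show Irrational (-1 / (cfOrbit (-1) 1 x j - (gip (-1) 1 (cfOrbit (-1) 1 x j) : ℝ)))
    have h1 : Irrational (cfOrbit (-1) 1 x j - (gip (-1) 1 (cfOrbit (-1) 1 x j) : ℝ)) :=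
      ih.sub_intCast _
    have := h1.inv.neg
    rwa [neg_div, one_div] at *

lemma abs_orbit (x : ℝ) (hx : Irrational x) :
    ∀ j ≥ 1, 1 < cfOrbit (-1) 1 x j ∨ cfOrbit (-1) 1 x j < -1 := by
  intro j hj
  induction j with
  | zero => omega
  | succ j ih =>
    rcases Nat.eq_or_lt_of_le hj with h | h
    · -- j + 1 = 1, so j = 0
      have hj0 : j = 0 := by omega
      subst hj0
      show 1 < -1 / (x - (gip (-1) 1 x : ℝ)) ∨ -1 / (x - (gip (-1) 1 x : ℝ)) < -1
      obtain ⟨h1, h2, h3⟩ := frac_mem x hx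
      rcases lt_or_gt_of_ne h3 with ht | ht
      · left; rw [lt_div_iff_of_neg ht]; linarith
      · right; rw [div_lt_iff₀ ht]; linarith
    · have hj1 : 1 ≤ j := by omega
      have hirr := irr_orbit x hx j
      rcases ih hj1 with hc | hc
      · right
        exact step_pos _ hirr hc
      · left
        exact step_neg _ hirr hc

/-- For the `(-1,1)`-continued fraction algorithm applied to an
irrational `x`, the partial quotients `a_j = [x_j]_{-1,1}` alternate in sign for
`j ≥ 1`: `a_j` and `a_{j+1}` have opposite signs. -/
theorem stmt5 (x : ℝ) (hx : Irrational x) :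
    ∀ j ≥ 1, gip (-1) 1 (cfOrbit (-1) 1 x j) * gip (-1) 1 (cfOrbit (-1) 1 x (j + 1)) < 0 := by
  intro j hj
  have hirr := irr_orbit x hx j
  have hnext : cfOrbit (-1) 1 x (j + 1)
      = -1 / (cfOrbit (-1) 1 x j - (gip (-1) 1 (cfOrbit (-1) 1 x j) : ℝ)) := rfl
  rcases abs_orbit x hx j hj with hc | hc
  · have ha : 1 ≤ gip (-1) 1 (cfOrbit (-1) 1 x j) := gip_pos_of _ hc
    have hb : cfOrbit (-1) 1 x (j + 1) < -1 := by rw [hnext]; exact step_pos _ hirr hc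
    have hb' : gip (-1) 1 (cfOrbit (-1) 1 x (j + 1)) ≤ -1 := gip_neg_of _ hb
    nlinarith
  · have ha : gip (-1) 1 (cfOrbit (-1) 1 x j) ≤ -1 := gip_neg_of _ hc
    have hb : 1 < cfOrbit (-1) 1 x (j + 1) := by rw [hnext]; exact step_neg _ hirr hc
    have hb' : 1 ≤ gip (-1) 1 (cfOrbit (-1) 1 x (j + 1)) := gip_pos_of _ hb
    nlinarith
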